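/- arXiv:1612.01902 — 3 statements merged into one kernel-verified Lean document; each statement's English description precedes it below -/
import Mathlib

section
/- For every real α ∈ (0,2) with α ≠ 1 and every integer b ≥ 2, the sum over k from 2 to b of k·Γ(k-α)/Γ(k+1) equals Γ(2-α)/(α-1) − Γ(b-α+1)·b·(b+1)/((α-1)·Γ(b+2)). -/
open Real Finset

theorem sum_k_gamma_ratio (α : ℝ) (hα0 : 0 < α) (hα2 : α < 2) (hα1 : α ≠ 1)
    (b : ℕ) (hb : 2 ≤ b) :
    ∑ k ∈ Finset.Icc 2 b, (k : ℝ) * Real.Gamma ((k : ℝ) - α) / Real.Gamma ((k : ℝ) + 1) =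
      Real.Gamma (2 - α) / (α - 1) -
        Real.Gamma ((b : ℝ) - α + 1) * (b : ℝ) * ((b : ℝ) + 1) /
          ((α - 1) * Real.Gamma ((b : ℝ) + 2)) := by
  have hα1' : α - 1 ≠ 0 := sub_ne_zero.mpr hα1
  induction b, hb using Nat.le_induction with
  | base =>
    rw [Finset.Icc_self, Finset.sum_singleton]
    have h2α : (2:ℝ) - α ≠ 0 := by intro h; nlinarith
    have h1 : Real.Gamma (2 - α + 1) = (2 - α) * Real.Gamma (2 - α) :=
      Real.Gamma_add_one h2α
    have hΓ3 : Real.Gamma 3 = 2 := by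
      rw [show (3:ℝ) = 2 + 1 by norm_num, Real.Gamma_add_one (by norm_num),
        show (2:ℝ) = 1 + 1 by norm_num, Real.Gamma_add_one (by norm_num), Real.Gamma_one]
      norm_num
    have hΓ4 : Real.Gamma 4 = 6 := by
      rw [show (4:ℝ) = 3 + 1 by norm_num, Real.Gamma_add_one (by norm_num), hΓ3]; norm_num
    push_cast
    rw [show ((2:ℝ) + 2) = 4 by norm_num, show ((2:ℝ) + 1) = 3 by norm_num, hΓ3, hΓ4, h1]
    field_simp
    ring
  | succ b hb ih =>
    rw [Finset.sum_Icc_succ_top (by omega : 2 ≤ b + 1), ih]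
    push_cast
    set x : ℝ := (b : ℝ) with hx
    have hxpos : (0:ℝ) < x := by positivity
    have hx2 : (2:ℝ) ≤ x := by rw [hx]; exact_mod_cast hb
    have hΓ2pos : 0 < Real.Gamma (x + 2) := Real.Gamma_pos_of_pos (by linarith)
    have hΓ3 : Real.Gamma (x + 1 + 2) = (x + 2) * Real.Gamma (x + 2) := by
      rw [show x + 1 + 2 = (x + 2) + 1 by ring, Real.Gamma_add_one (by linarith)]
    have he : Real.Gamma (x + 1 - α + 1) = (x + 1 - α) * Real.Gamma (x + 1 - α) :=
      Real.Gamma_add_one (by intro h; linarith)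
    have hrw : x - α + 1 = (x + 1 - α - 1) + 1 := by ring
    have h2 : Real.Gamma (x - α + 1) = Real.Gamma (x + 1 - α) := by
      rw [show x - α + 1 = x + 1 - α by ring]
    rw [hΓ3, he, h2]
    have hΓ2 : Real.Gamma (x + 2) ≠ 0 := ne_of_gt hΓ2pos
    field_simp
    ring
end

section
/- For α ∈ (1,2), the limit as b → ∞ of b^(α-1) · Γ(b-α+1)·b·(b+1)/((α-1)·Γ(b+2)) equals 1/(α-1); in particular, for α ∈ (1,2), the limit as b → ∞ of ∑_{k=2}^{b} k·Γ(k-α)/Γ(k+1) equals Γ(2-α)/(α-1). -/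
open Real Finset Filter Topology

lemma gamma_prod_aux (s : ℝ) (hs : ∀ j : ℕ, s + j ≠ 0) (n : ℕ) :
    Real.Gamma (s + n + 1) = Real.Gamma s * ∏ j ∈ Finset.range (n + 1), (s + j) := by
  induction n with
  | zero =>
    simp only [Nat.cast_zero, add_zero, Finset.prod_range_one]
    rw [Real.Gamma_add_one (by simpa using hs 0)]
    simp [mul_comm]
  | succ n ih =>
    have h : s + (n : ℝ) + 1 ≠ 0 := by
      have h2 := hs (n + 1); push_cast at h2
      intro a; exact h2 (by linarith)
    have key : Real.Gamma (s + (↑(n + 1) : ℝ) + 1) = (s + n + 1) * Real.Gamma (s + n + 1) := by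
      push_cast
      rw [show s + ((n : ℝ) + 1) + 1 = (s + n + 1) + 1 by ring, Real.Gamma_add_one h]
    rw [key, ih]
    conv_rhs => rw [Finset.prod_range_succ]
    push_cast
    ring

lemma gamma_ratio_tendsto (s : ℝ) (hs : ∀ j : ℕ, s + j ≠ 0)
    (hΓ : Real.Gamma s ≠ 0) :
    Tendsto (fun n : ℕ => Real.Gamma ((n : ℝ) + 1 + s) / ((n : ℝ) ^ s * (n.factorial : ℝ)))
      atTop (𝓝 1) := by
  have h1 : Tendsto (fun n : ℕ => Real.Gamma s / Real.GammaSeq s n) atTop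
      (𝓝 (Real.Gamma s / Real.Gamma s)) :=
    tendsto_const_nhds.div (Real.GammaSeq_tendsto_Gamma s) hΓ
  rw [div_self hΓ] at h1
  convert h1 using 2 with n
  rw [Real.GammaSeq, div_div_eq_mul_div, ← gamma_prod_aux s hs n]
  congr 2
  ring

lemma alpha_facts {α : ℝ} (hα1 : 1 < α) (hα2 : α < 2) :
    (∀ j : ℕ, -α + j ≠ 0) ∧ Real.Gamma (-α) ≠ 0 := by
  have h : ∀ j : ℕ, -α + j ≠ 0 := by
    intro j hj
    have hj' : α = (j : ℝ) := by linarith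
    have h1 : 1 < j := by exact_mod_cast hj' ▸ hα1
    have h2 : j < 2 := by exact_mod_cast hj' ▸ hα2
    omega
  refine ⟨h, Real.Gamma_ne_zero ?_⟩
  intro m hm
  exact h m (by linarith [hm])

lemma part1 (α : ℝ) (hα1 : 1 < α) (hα2 : α < 2) :
    Filter.Tendsto
      (fun b : ℕ => (b : ℝ) ^ (α - 1) *
        (Real.Gamma ((b : ℝ) - α + 1) * (b : ℝ) * ((b : ℝ) + 1) /
          ((α - 1) * Real.Gamma ((b : ℝ) + 2))))
      Filter.atTop (nhds (1 / (α - 1))) := by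
  obtain ⟨hs, hΓ⟩ := alpha_facts hα1 hα2
  have hg := (gamma_ratio_tendsto (-α) hs hΓ).mul_const (1 / (α - 1))
  rw [one_mul] at hg
  refine hg.congr' ?_
  filter_upwards [eventually_ge_atTop 1] with b hb
  have hB : (0 : ℝ) < b := by exact_mod_cast hb
  have hfac : Real.Gamma ((b : ℝ) + 2) = ((b + 1).factorial : ℝ) := by
    rw [show ((b : ℝ) + 2) = ((b + 1 : ℕ) : ℝ) + 1 by push_cast; ring,
      Real.Gamma_nat_eq_factorial]
  have hfac2 : ((b + 1).factorial : ℝ) = ((b : ℝ) + 1) * (b.factorial : ℝ) := by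
    rw [Nat.factorial_succ]; push_cast; ring
  have hΓmatch : Real.Gamma ((b : ℝ) + 1 + -α) = Real.Gamma ((b : ℝ) - α + 1) := by
    congr 1; ring
  have hpow : (b : ℝ) ^ (-α) * (b : ℝ) ^ (α - 1) * (b : ℝ) = 1 := by
    rw [← Real.rpow_add hB, show -α + (α - 1) = -1 by ring, Real.rpow_neg_one]
    field_simp
  have hα1' : α - 1 ≠ 0 := by linarith
  have hb1 : (b : ℝ) + 1 ≠ 0 := by positivity
  have hfb : (b.factorial : ℝ) ≠ 0 := by positivity
  have hpb : (b : ℝ) ^ (-α) ≠ 0 := ne_of_gt (Real.rpow_pos_of_pos hB _)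
  rw [hΓmatch, hfac, hfac2]
  field_simp
  linear_combination (-Real.Gamma ((b:ℝ) - α + 1)) * hpow

lemma sum_identity (α : ℝ) (hα1 : 1 < α) (hα2 : α < 2) :
    ∀ b : ℕ, 1 ≤ b →
      ∑ k ∈ Finset.Icc 2 b, (k : ℝ) * Real.Gamma ((k : ℝ) - α) / Real.Gamma ((k : ℝ) + 1) =
        Real.Gamma (2 - α) / (α - 1) -
          Real.Gamma ((b : ℝ) - α + 1) * (b : ℝ) * ((b : ℝ) + 1) /
            ((α - 1) * Real.Gamma ((b : ℝ) + 2)) := by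
  have hα1' : α - 1 ≠ 0 := by intro h; linarith [h]
  intro b hb
  induction b, hb using Nat.le_induction with
  | base =>
    rw [show Finset.Icc 2 1 = ∅ from Finset.Icc_eq_empty (by omega), Finset.sum_empty]
    have h3 : Real.Gamma ((1 : ℕ) + 2 : ℝ) = 2 := by
      rw [show ((1 : ℕ) + 2 : ℝ) = ((2 : ℕ) : ℝ) + 1 by push_cast; ring,
        Real.Gamma_nat_eq_factorial]
      norm_num
    rw [h3, show ((1 : ℕ) : ℝ) - α + 1 = 2 - α by push_cast; ring]
    push_cast
    field_simp
    ring
  | succ b hb ih =>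
    rw [Finset.sum_Icc_succ_top (by omega : 2 ≤ b + 1), ih]
    have hB : (1 : ℝ) ≤ (b : ℝ) := by exact_mod_cast hb
    have hpos : (0 : ℝ) < (b : ℝ) + 1 - α := by linarith
    have h1 : Real.Gamma ((b : ℝ) + 1 - α + 1) = ((b : ℝ) + 1 - α) * Real.Gamma ((b : ℝ) + 1 - α) :=
      Real.Gamma_add_one (ne_of_gt hpos)
    have h2 : Real.Gamma ((b : ℝ) + 2 + 1) = ((b : ℝ) + 2) * Real.Gamma ((b : ℝ) + 2) := by
      exact Real.Gamma_add_one (by positivity)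
    have hEq : Real.Gamma ((b : ℝ) + 1 - α) = Real.Gamma ((b : ℝ) - α + 1) := by
      congr 1; ring
    have hG2pos : (0 : ℝ) < Real.Gamma ((b : ℝ) + 2) := Real.Gamma_pos_of_pos (by positivity)
    push_cast
    rw [show (b : ℝ) + 1 - α + 1 = (b : ℝ) + 1 - α + 1 from rfl]
    rw [show (b : ℝ) + 1 + 2 = (b : ℝ) + 2 + 1 by ring, h2,
      show (b : ℝ) + 1 - α + 1 = ((b : ℝ) + 1 - α) + 1 by ring, h1, hEq]
    field_simp
    ring

theorem limit_k_gamma_ratio (α : ℝ) (hα1 : 1 < α) (hα2 : α < 2) :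
    Filter.Tendsto
      (fun b : ℕ => (b : ℝ) ^ (α - 1) *
        (Real.Gamma ((b : ℝ) - α + 1) * (b : ℝ) * ((b : ℝ) + 1) /
          ((α - 1) * Real.Gamma ((b : ℝ) + 2))))
      Filter.atTop (nhds (1 / (α - 1))) ∧
    Filter.Tendsto
      (fun b : ℕ => ∑ k ∈ Finset.Icc 2 b,
        (k : ℝ) * Real.Gamma ((k : ℝ) - α) / Real.Gamma ((k : ℝ) + 1))
      Filter.atTop (nhds (Real.Gamma (2 - α) / (α - 1))) := by
  have hp1 := part1 α hα1 hα2
  refine ⟨hp1, ?_⟩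
  have hpow0 : Tendsto (fun b : ℕ => (b : ℝ) ^ (1 - α)) atTop (𝓝 0) := by
    have h := (tendsto_rpow_neg_atTop (y := α - 1) (by linarith)).comp
      tendsto_natCast_atTop_atTop
    simpa [Function.comp_def, show -(α - 1) = 1 - α by ring] using h
  have hR : Tendsto (fun b : ℕ => Real.Gamma ((b : ℝ) - α + 1) * (b : ℝ) * ((b : ℝ) + 1) /
      ((α - 1) * Real.Gamma ((b : ℝ) + 2))) atTop (𝓝 0) := by
    have h := hp1.mul hpow0
    rw [mul_zero] at h
    refine h.congr' ?_
    filter_upwards [eventually_ge_atTop 1] with b hb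
    have hB : (0 : ℝ) < b := by exact_mod_cast hb
    have h1 : (b : ℝ) ^ (α - 1) * (b : ℝ) ^ (1 - α) = 1 := by
      rw [← Real.rpow_add hB]; norm_num
    set X := Real.Gamma ((b : ℝ) - α + 1) * (b : ℝ) * ((b : ℝ) + 1) /
      ((α - 1) * Real.Gamma ((b : ℝ) + 2)) with hX
    calc (b : ℝ) ^ (α - 1) * X * (b : ℝ) ^ (1 - α)
        = ((b : ℝ) ^ (α - 1) * (b : ℝ) ^ (1 - α)) * X := by ring
      _ = X := by rw [h1, one_mul]
  have h := tendsto_const_nhds (x := Real.Gamma (2 - α) / (α - 1)) (f := atTop (α := ℕ)) |>.sub hR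
  rw [sub_zero] at h
  refine h.congr' ?_
  filter_upwards [eventually_ge_atTop 1] with b hb
  exact (sum_identity α hα1 hα2 b hb).symm
end

section
/- For α ∈ (1,2) and integer r ≥ 3, the function x_r(t) = (1/(2(r-1)!))·(1+t)^{-α/(α-1)}·(αt/(1+t))^{r-1} satisfies x_r'(t) = α·x_{r-1}(t)·x₁(t)/x₀(t)^{2-α} − (α/(α-1))·x_r(t)·x₀(t)^{α-1} with x_r(0) = 0, where x₀(t) = (1+t)^{-1/(α-1)}, x₁(t) = (1+t)^{-α/(α-1)}, and x_{r-1}(t) = (1/(2(r-2)!))·(1+t)^{-α/(α-1)}·(αt/(1+t))^{r-2}. -/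
set_option maxHeartbeats 1000000


open Real

theorem xr_ode (α : ℝ) (hα1 : 1 < α) (hα2 : α < 2) (r : ℕ) (hr : 3 ≤ r) :
    (∀ t : ℝ, 0 ≤ t →
      HasDerivAt
        (fun s : ℝ => (1 / (2 * (Nat.factorial (r - 1) : ℝ))) *
          (1 + s) ^ (-(α / (α - 1))) * (α * s / (1 + s)) ^ (r - 1))
        (α * ((1 / (2 * (Nat.factorial (r - 2) : ℝ))) *
              (1 + t) ^ (-(α / (α - 1))) * (α * t / (1 + t)) ^ (r - 2)) *
            ((1 + t) ^ (-(α / (α - 1)))) /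
            ((1 + t) ^ (-(1 / (α - 1)))) ^ (2 - α) -
          (α / (α - 1)) *
            ((1 / (2 * (Nat.factorial (r - 1) : ℝ))) *
              (1 + t) ^ (-(α / (α - 1))) * (α * t / (1 + t)) ^ (r - 1)) *
            ((1 + t) ^ (-(1 / (α - 1)))) ^ (α - 1)) t) ∧
    ((1 / (2 * (Nat.factorial (r - 1) : ℝ))) *
      (1 + (0:ℝ)) ^ (-(α / (α - 1))) * (α * 0 / (1 + (0:ℝ))) ^ (r - 1) : ℝ) = 0 := by
  have hα1' : (0:ℝ) < α - 1 := by linarith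
  constructor
  · intro t ht
    have hu : (0:ℝ) < 1 + t := by linarith
    have hu' : (1:ℝ) + t ≠ 0 := hu.ne'
    set p : ℝ := -(α / (α - 1)) with hp
    have hn1 : r - 1 = (r - 2) + 1 := by omega
    have hn2 : r - 1 - 1 = r - 2 := by omega
    have hfac : (Nat.factorial (r-1) : ℝ) = (((r-2 : ℕ):ℝ) + 1) * Nat.factorial (r-2) := by
      rw [hn1, Nat.factorial_succ]; push_cast; ring
    have h1 : HasDerivAt (fun s : ℝ => (1 + s) ^ p) (1 * p * (1+t)^(p-1)) t :=
      HasDerivAt.rpow_const ((hasDerivAt_id t).const_add 1) (Or.inl hu')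
    have h2 : HasDerivAt (fun s : ℝ => α * s / (1 + s))
        ((α * 1 * (1+t) - α * t * 1) / (1+t)^2) t :=
      ((hasDerivAt_id t).const_mul α).div ((hasDerivAt_id t).const_add 1) hu'
    have h3 : HasDerivAt (fun s : ℝ => (α * s / (1 + s)) ^ (r-1))
        ((r-1 : ℕ) * (α*t/(1+t))^(r-1-1) * ((α * 1 * (1+t) - α * t * 1) / (1+t)^2)) t :=
      h2.pow _
    have h4 := (h1.const_mul (1 / (2 * (Nat.factorial (r - 1) : ℝ)))).mul h3
    refine h4.congr_deriv ?_
    symm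
    have hApos : (0:ℝ) < (1+t) ^ p := rpow_pos_of_pos hu p
    have hA1 : (1+t) ^ (p-1) = (1+t)^p / (1+t) := by
      rw [Real.rpow_sub hu, Real.rpow_one]
    have hA2 : ((1+t) ^ (-(1/(α-1)))) ^ (α-1) = (1+t)⁻¹ := by
      rw [← Real.rpow_mul hu.le]
      rw [show -(1/(α-1)) * (α-1) = -1 by field_simp]
      exact Real.rpow_neg_one _
    have hA3 : ((1+t) ^ (-(1/(α-1)))) ^ (2-α) = (1+t)^p * ((1+t) * (1+t)) := by
      rw [← Real.rpow_mul hu.le]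
      rw [show -(1/(α-1)) * (2-α) = p + 2 by rw [hp]; field_simp; ring]
      rw [Real.rpow_add hu, show (2:ℝ) = ((2:ℕ):ℝ) by norm_num, Real.rpow_natCast]
      ring
    rw [hA1, hA2, hA3, hfac, hn2, hn1,
        show (α * 1 * (1+t) - α * t * 1) = α by ring, pow_succ]
    push_cast
    generalize (α * t / (1+t)) ^ (r-2) = H
    generalize hG : α * t / (1+t) = G
    generalize hA : (1+t) ^ p = A at hApos ⊢
    have hAne : A ≠ 0 := hApos.ne'
    have hFne : (Nat.factorial (r-2) : ℝ) ≠ 0 := by positivity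
    have hmne : ((r-2 : ℕ):ℝ) + 1 ≠ 0 := by positivity
    rw [hp]
    field_simp
    ring
  · have : r - 1 ≠ 0 := by omega
    simp [this]
end
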